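/- (Monotonicity and convexity of the Wyner-Ziv-type rate-distortion function, used in the proof of Theorem 6) Let (X,Y,Z) be jointly distributed finite-valued random variables and let D_0 = ℰ(Z|(X,Y)) be the minimum attainable distortion. Then the function D ↦ R^FWZ_{Z,X|Y}(D) is non-increasing on [D_0, ∞) and convex on [D_0, ∞). -/
import Mathlib


namespace Cascade

structure FinPMF (Ω : Type) [Fintype Ω] where
  p : Ω → ℝ
  nonneg : ∀ ω, 0 ≤ p ω
  sum_one : ∑ ω, p ω = 1

variable {Ω : Type} [Fintype Ω]

/-- Probability that the random variable `X` takes the value `x`. -/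
noncomputable def prob (μ : FinPMF Ω) {α : Type} [DecidableEq α] (X : Ω → α) (x : α) : ℝ :=
  ∑ ω ∈ Finset.univ.filter (fun ω => X ω = x), μ.p ω

/-- Expectation of a real random variable. -/
noncomputable def expect (μ : FinPMF Ω) (f : Ω → ℝ) : ℝ := ∑ ω, μ.p ω * f ω

/-- Shannon entropy (base 2) of a finite-valued random variable. -/
noncomputable def entropy (μ : FinPMF Ω) {α : Type} [Fintype α] [DecidableEq α] (X : Ω → α) : ℝ :=
  -∑ x, prob μ X x * Real.logb 2 (prob μ X x)

/-- Conditional mutual information `I(X;Y|Z)` (base 2). -/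
noncomputable def condMI (μ : FinPMF Ω) {α β γ : Type} [Fintype α] [DecidableEq α]
    [Fintype β] [DecidableEq β] [Fintype γ] [DecidableEq γ]
    (X : Ω → α) (Y : Ω → β) (Z : Ω → γ) : ℝ :=
  entropy μ (fun ω => (X ω, Z ω)) + entropy μ (fun ω => (Y ω, Z ω))
    - entropy μ (fun ω => (X ω, Y ω, Z ω)) - entropy μ Z

/-- Minimum expected distortion `ℰ(Z|Q)` for estimating the value `Zr` from the
observation `Q` by some function `f`. -/
noncomputable def calE {Ω : Type} [Fintype Ω] (μ : FinPMF Ω) {Zt Zhat : Type}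
    [Fintype Zhat] [Nonempty Zhat] (d : Zt → Zhat → ℝ)
    {α : Type} (Q : Ω → α) (Zr : Ω → Zt) : ℝ :=
  ⨅ f : α → Zhat, expect μ (fun ω => d (Zr ω) (f (Q ω)))

/-- The extension of a pmf `μ` by an auxiliary `U ∈ Fin m` generated from `X` through the
conditional pmf (kernel) `k`; this builds in the Markov chain `U −∘− X −∘− everything else`. -/
noncomputable def extendPMF {Ω : Type} [Fintype Ω] (μ : FinPMF Ω) {𝒳 : Type}
    (X : Ω → 𝒳) {m : ℕ} (k : 𝒳 → Fin m → ℝ)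
    (hk0 : ∀ x u, 0 ≤ k x u) (hk1 : ∀ x, ∑ u, k x u = 1) : FinPMF (Ω × Fin m) where
  p := fun p => μ.p p.1 * k (X p.1) p.2
  nonneg := fun p => mul_nonneg (μ.nonneg _) (hk0 _ _)
  sum_one := by
    rw [Fintype.sum_prod_type]
    simp_rw [← Finset.mul_sum, hk1, mul_one]
    exact μ.sum_one

/-- The Wyner-Ziv-type rate-distortion function `R^FWZ_{Z,X|Y}(D)` for lossy function
computation: the infimum of `I(X;U|Y)` over all finite auxiliary alphabets `Fin m` and all
auxiliaries `U` generated from `X` via a conditional pmf `k` (so that `U −∘− X −∘− (Y,Z)`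
is a Markov chain) such that `ℰ(Z|(U,Y)) ≤ D`. -/
noncomputable def RFWZ {Ω 𝒳 𝒴 Zt : Type} [Fintype Ω] [Fintype 𝒳] [DecidableEq 𝒳]
    [Fintype 𝒴] [DecidableEq 𝒴] {Zhat : Type} [Fintype Zhat] [Nonempty Zhat]
    (μ : FinPMF Ω) (X : Ω → 𝒳) (Y : Ω → 𝒴) (Zr : Ω → Zt) (d : Zt → Zhat → ℝ)
    (D : ℝ) : ℝ :=
  sInf { r : ℝ | ∃ (m : ℕ) (k : 𝒳 → Fin m → ℝ) (hk0 : ∀ x u, 0 ≤ k x u)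
      (hk1 : ∀ x, ∑ u, k x u = 1),
      calE (extendPMF μ X k hk0 hk1) d (fun p => (p.2, Y p.1)) (fun p => Zr p.1) ≤ D ∧
      r = condMI (extendPMF μ X k hk0 hk1) (fun p => X p.1) (fun p => p.2)
            (fun p => Y p.1) }

section Lemmas

variable {Ω : Type} [Fintype Ω]

lemma prob_nonneg (μ : FinPMF Ω) {α : Type} [DecidableEq α] (V : Ω → α) (v : α) :
    0 ≤ prob μ V v :=
  Finset.sum_nonneg fun ω _ => μ.nonneg ω

lemma sum_prob (μ : FinPMF Ω) {α : Type} [Fintype α] [DecidableEq α] (V : Ω → α) :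
    ∑ v, prob μ V v = 1 := by
  unfold prob
  simp only [Finset.sum_filter]
  rw [Finset.sum_comm, ← μ.sum_one]
  refine Finset.sum_congr rfl fun ω _ => ?_
  simp

lemma prob_congr (μ : FinPMF Ω) {α β : Type} [DecidableEq α] [DecidableEq β]
    (V : Ω → α) (v : α) (V' : Ω → β) (v' : β) (h : ∀ ω, V ω = v ↔ V' ω = v') :
    prob μ V v = prob μ V' v' := by
  unfold prob
  congr 1
  exact Finset.filter_congr fun ω _ => by simpa using h ω

lemma prob_eq_sum_pair (μ : FinPMF Ω) {α κ : Type} [DecidableEq α] [Fintype κ]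
    [DecidableEq κ] (V : Ω → α) (W : Ω → κ) (v : α) :
    prob μ V v = ∑ w, prob μ (fun ω => (V ω, W ω)) (v, w) := by
  unfold prob
  simp only [Finset.sum_filter, Prod.mk.injEq]
  rw [Finset.sum_comm]
  refine Finset.sum_congr rfl fun ω _ => ?_
  by_cases h : V ω = v <;> simp [h]

lemma expect_nonneg (μ : FinPMF Ω) (f : Ω → ℝ) (hf : ∀ ω, 0 ≤ f ω) :
    0 ≤ expect μ f :=
  Finset.sum_nonneg fun ω _ => mul_nonneg (μ.nonneg ω) (hf ω)

end Lemmas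
section Nonneg

variable {Ω : Type} [Fintype Ω]

lemma sum3_swap_outer {α β γ : Type} [Fintype α] [Fintype β] [Fintype γ]
    (f : α → β → γ → ℝ) :
    ∑ a, ∑ b, ∑ c, f a b c = ∑ c, ∑ a, ∑ b, f a b c :=
  (Finset.sum_congr rfl fun _ _ => Finset.sum_comm).trans Finset.sum_comm

lemma sum3_rot {α β γ : Type} [Fintype α] [Fintype β] [Fintype γ]
    (f : α → β → γ → ℝ) :
    ∑ a, ∑ b, ∑ c, f a b c = ∑ b, ∑ c, ∑ a, f a b c :=
  Finset.sum_comm.trans (Finset.sum_congr rfl fun _ _ => Finset.sum_comm)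

/-- Scaled log-sum identity. -/
lemma sum_scaled_logb {ι : Type} [Fintype ι] {a : ℝ} (ha : 0 ≤ a) {q : ι → ℝ}
    (hq : ∀ i, 0 ≤ q i) (hq1 : ∑ i, q i = 1) :
    ∑ i, (a * q i) * Real.logb 2 (a * q i)
      = a * ∑ i, q i * Real.logb 2 (q i) + a * Real.logb 2 a := by
  rcases eq_or_lt_of_le ha with ha0 | ha0
  · simp [← ha0]
  · have h : ∀ i, (a * q i) * Real.logb 2 (a * q i)
        = a * (q i * Real.logb 2 (q i)) + (a * Real.logb 2 a) * q i := by
      intro i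
      rcases eq_or_lt_of_le (hq i) with h0 | h0
      · simp [← h0]
      · rw [Real.logb_mul (ne_of_gt ha0) (ne_of_gt h0)]
        ring
    rw [Finset.sum_congr rfl fun i _ => h i, Finset.sum_add_distrib,
      ← Finset.mul_sum, ← Finset.mul_sum, hq1, mul_one]

lemma condMI_nonneg (μ : FinPMF Ω) {α β γ : Type} [Fintype α] [DecidableEq α]
    [Fintype β] [DecidableEq β] [Fintype γ] [DecidableEq γ]
    (A : Ω → α) (B : Ω → β) (C : Ω → γ) : 0 ≤ condMI μ A B C := by
  classical
  have hP3nn : ∀ a b c, 0 ≤ prob μ (fun ω => (A ω, B ω, C ω)) (a, b, c) :=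
    fun a b c => prob_nonneg _ _ _
  have hPACnn : ∀ a c, 0 ≤ prob μ (fun ω => (A ω, C ω)) (a, c) :=
    fun a c => prob_nonneg _ _ _
  have hPBCnn : ∀ b c, 0 ≤ prob μ (fun ω => (B ω, C ω)) (b, c) :=
    fun b c => prob_nonneg _ _ _
  have hPCnn : ∀ c, 0 ≤ prob μ C c := fun c => prob_nonneg _ _ _
  -- marginalization identities
  have hAC : ∀ a c, prob μ (fun ω => (A ω, C ω)) (a, c)
      = ∑ b, prob μ (fun ω => (A ω, B ω, C ω)) (a, b, c) := by
    intro a c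
    rw [prob_eq_sum_pair μ (fun ω => (A ω, C ω)) B (a, c)]
    refine Finset.sum_congr rfl fun b _ => ?_
    exact prob_congr μ _ _ _ _ fun ω => by
      constructor <;> (intro h; simp only [Prod.mk.injEq] at h ⊢) <;> tauto
  have hBC : ∀ b c, prob μ (fun ω => (B ω, C ω)) (b, c)
      = ∑ a, prob μ (fun ω => (A ω, B ω, C ω)) (a, b, c) := by
    intro b c
    rw [prob_eq_sum_pair μ (fun ω => (B ω, C ω)) A (b, c)]
    refine Finset.sum_congr rfl fun a _ => ?_
    exact prob_congr μ _ _ _ _ fun ω => by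
      constructor <;> (intro h; simp only [Prod.mk.injEq] at h ⊢) <;> tauto
  have hC : ∀ c, prob μ C c
      = ∑ a, ∑ b, prob μ (fun ω => (A ω, B ω, C ω)) (a, b, c) := by
    intro c
    rw [prob_eq_sum_pair μ C (fun ω => (A ω, B ω)) c, Fintype.sum_prod_type]
    refine Finset.sum_congr rfl fun a _ => Finset.sum_congr rfl fun b _ => ?_
    exact prob_congr μ _ _ _ _ fun ω => by
      constructor <;> (intro h; simp only [Prod.mk.injEq] at h ⊢) <;> tauto
  have hCsumAC : ∀ c, prob μ C c = ∑ a, prob μ (fun ω => (A ω, C ω)) (a, c) := by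
    intro c; rw [hC c]; exact Finset.sum_congr rfl fun a _ => (hAC a c).symm
  have hCsumBC : ∀ c, prob μ C c = ∑ b, prob μ (fun ω => (B ω, C ω)) (b, c) := by
    intro c; rw [hC c, Finset.sum_comm]
    exact Finset.sum_congr rfl fun b _ => (hBC b c).symm
  -- pointwise bounds between marginals
  have hP3leAC : ∀ a b c, prob μ (fun ω => (A ω, B ω, C ω)) (a, b, c)
      ≤ prob μ (fun ω => (A ω, C ω)) (a, c) := fun a b c => by
    rw [hAC]
    exact Finset.single_le_sum
      (f := fun b => prob μ (fun ω => (A ω, B ω, C ω)) (a, b, c))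
      (fun b _ => hP3nn a b c) (Finset.mem_univ b)
  have hP3leBC : ∀ a b c, prob μ (fun ω => (A ω, B ω, C ω)) (a, b, c)
      ≤ prob μ (fun ω => (B ω, C ω)) (b, c) := fun a b c => by
    rw [hBC]
    exact Finset.single_le_sum
      (f := fun a => prob μ (fun ω => (A ω, B ω, C ω)) (a, b, c))
      (fun a _ => hP3nn a b c) (Finset.mem_univ a)
  have hACleC : ∀ a c, prob μ (fun ω => (A ω, C ω)) (a, c) ≤ prob μ C c := fun a c => by
    rw [hCsumAC]
    exact Finset.single_le_sum (f := fun a => prob μ (fun ω => (A ω, C ω)) (a, c))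
      (fun a _ => hPACnn a c) (Finset.mem_univ a)
  have hlog2 : (0:ℝ) < Real.log 2 := Real.log_pos (by norm_num)
  -- total mass of the product distribution is at most one
  have hqsum : ∑ a, ∑ b, ∑ c, (prob μ (fun ω => (A ω, C ω)) (a, c)
      * prob μ (fun ω => (B ω, C ω)) (b, c) / prob μ C c) ≤ 1 := by
    rw [sum3_swap_outer]
    have h2 : ∀ c, ∑ a, ∑ b, (prob μ (fun ω => (A ω, C ω)) (a, c)
        * prob μ (fun ω => (B ω, C ω)) (b, c) / prob μ C c) ≤ prob μ C c := by
      intro c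
      have heq : ∑ a, ∑ b, (prob μ (fun ω => (A ω, C ω)) (a, c)
          * prob μ (fun ω => (B ω, C ω)) (b, c) / prob μ C c)
          = prob μ C c * (prob μ C c / prob μ C c) := by
        simp_rw [mul_div_assoc, ← Finset.mul_sum, ← Finset.sum_div,
          ← hCsumBC c, ← Finset.sum_mul, ← hCsumAC c]
      rw [heq]
      rcases eq_or_lt_of_le (hPCnn c) with h0 | h0
      · rw [← h0]; simp
      · rw [div_self (ne_of_gt h0), mul_one]
    calc _ ≤ ∑ c, prob μ C c := Finset.sum_le_sum fun c _ => h2 c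
      _ = 1 := sum_prob μ C
  have hP3sum : ∑ a, ∑ b, ∑ c, prob μ (fun ω => (A ω, B ω, C ω)) (a, b, c) = 1 := by
    have := sum_prob μ (fun ω => (A ω, B ω, C ω))
    rw [Fintype.sum_prod_type] at this
    simp_rw [Fintype.sum_prod_type] at this
    exact this
  -- key pointwise inequality
  have key : ∀ a b c,
      prob μ (fun ω => (A ω, B ω, C ω)) (a, b, c)
        * (Real.logb 2 (prob μ (fun ω => (A ω, C ω)) (a, c))
          + Real.logb 2 (prob μ (fun ω => (B ω, C ω)) (b, c))
          - Real.logb 2 (prob μ C c)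
          - Real.logb 2 (prob μ (fun ω => (A ω, B ω, C ω)) (a, b, c)))
      ≤ (prob μ (fun ω => (A ω, C ω)) (a, c) * prob μ (fun ω => (B ω, C ω)) (b, c)
          / prob μ C c
        - prob μ (fun ω => (A ω, B ω, C ω)) (a, b, c)) / Real.log 2 := by
    intro a b c
    rcases eq_or_lt_of_le (hP3nn a b c) with h0 | h0
    · rw [← h0]
      rw [zero_mul, sub_zero]
      exact div_nonneg (div_nonneg (mul_nonneg (hPACnn a c) (hPBCnn b c)) (hPCnn c))
        hlog2.le
    · have hACpos : 0 < prob μ (fun ω => (A ω, C ω)) (a, c) :=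
        lt_of_lt_of_le h0 (hP3leAC a b c)
      have hBCpos : 0 < prob μ (fun ω => (B ω, C ω)) (b, c) :=
        lt_of_lt_of_le h0 (hP3leBC a b c)
      have hCpos : 0 < prob μ C c := lt_of_lt_of_le hACpos (hACleC a c)
      set x := prob μ (fun ω => (A ω, B ω, C ω)) (a, b, c) with hx
      set qv := prob μ (fun ω => (A ω, C ω)) (a, c)
        * prob μ (fun ω => (B ω, C ω)) (b, c) / prob μ C c with hqv
      have hqpos : 0 < qv := div_pos (mul_pos hACpos hBCpos) hCpos
      have hlogq : Real.log qv
          = Real.log (prob μ (fun ω => (A ω, C ω)) (a, c))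
            + Real.log (prob μ (fun ω => (B ω, C ω)) (b, c))
            - Real.log (prob μ C c) := by
        rw [hqv, Real.log_div (ne_of_gt (mul_pos hACpos hBCpos)) (ne_of_gt hCpos),
          Real.log_mul (ne_of_gt hACpos) (ne_of_gt hBCpos)]
      have hsub : Real.log qv - Real.log x ≤ qv / x - 1 := by
        rw [← Real.log_div (ne_of_gt hqpos) (ne_of_gt h0)]
        exact Real.log_le_sub_one_of_pos (div_pos hqpos h0)
      have hmul : x * (Real.log qv - Real.log x) ≤ qv - x := by
        calc x * (Real.log qv - Real.log x) ≤ x * (qv / x - 1) :=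
              mul_le_mul_of_nonneg_left hsub h0.le
          _ = qv - x := by field_simp
      have hrw : Real.logb 2 (prob μ (fun ω => (A ω, C ω)) (a, c))
          + Real.logb 2 (prob μ (fun ω => (B ω, C ω)) (b, c))
          - Real.logb 2 (prob μ C c) - Real.logb 2 x
          = (Real.log qv - Real.log x) / Real.log 2 := by
        simp only [Real.logb, hlogq]
        ring
      rw [hrw, mul_div_assoc']
      exact div_le_div_of_nonneg_right hmul hlog2.le
  -- summed inequality
  have hsum : ∑ a, ∑ b, ∑ c,
      (prob μ (fun ω => (A ω, B ω, C ω)) (a, b, c)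
        * (Real.logb 2 (prob μ (fun ω => (A ω, C ω)) (a, c))
          + Real.logb 2 (prob μ (fun ω => (B ω, C ω)) (b, c))
          - Real.logb 2 (prob μ C c)
          - Real.logb 2 (prob μ (fun ω => (A ω, B ω, C ω)) (a, b, c)))) ≤ 0 := by
    have step : ∑ a, ∑ b, ∑ c,
        (prob μ (fun ω => (A ω, B ω, C ω)) (a, b, c)
          * (Real.logb 2 (prob μ (fun ω => (A ω, C ω)) (a, c))
            + Real.logb 2 (prob μ (fun ω => (B ω, C ω)) (b, c))
            - Real.logb 2 (prob μ C c)
            - Real.logb 2 (prob μ (fun ω => (A ω, B ω, C ω)) (a, b, c))))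
        ≤ ∑ a, ∑ b, ∑ c, ((prob μ (fun ω => (A ω, C ω)) (a, c)
            * prob μ (fun ω => (B ω, C ω)) (b, c) / prob μ C c
          - prob μ (fun ω => (A ω, B ω, C ω)) (a, b, c)) / Real.log 2) :=
      Finset.sum_le_sum fun a _ => Finset.sum_le_sum fun b _ =>
        Finset.sum_le_sum fun c _ => key a b c
    refine step.trans ?_
    simp only [← Finset.sum_div]
    simp only [Finset.sum_sub_distrib]
    rw [hP3sum]
    exact div_nonpos_of_nonpos_of_nonneg (by linarith) hlog2.le
  -- expand condMI as a triple sum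
  have eABC : entropy μ (fun ω => (A ω, B ω, C ω))
      = -∑ a, ∑ b, ∑ c, (prob μ (fun ω => (A ω, B ω, C ω)) (a, b, c)
          * Real.logb 2 (prob μ (fun ω => (A ω, B ω, C ω)) (a, b, c))) := by
    rw [entropy, Fintype.sum_prod_type]
    simp_rw [Fintype.sum_prod_type]
  have eAC : entropy μ (fun ω => (A ω, C ω))
      = -∑ a, ∑ b, ∑ c, (prob μ (fun ω => (A ω, B ω, C ω)) (a, b, c)
          * Real.logb 2 (prob μ (fun ω => (A ω, C ω)) (a, c))) := by
    rw [entropy, Fintype.sum_prod_type]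
    congr 1
    refine Finset.sum_congr rfl fun a _ => ?_
    rw [Finset.sum_comm]
    refine Finset.sum_congr rfl fun c _ => ?_
    rw [hAC a c, Finset.sum_mul, ← hAC a c]
  have eBC : entropy μ (fun ω => (B ω, C ω))
      = -∑ a, ∑ b, ∑ c, (prob μ (fun ω => (A ω, B ω, C ω)) (a, b, c)
          * Real.logb 2 (prob μ (fun ω => (B ω, C ω)) (b, c))) := by
    rw [entropy, Fintype.sum_prod_type]
    congr 1
    rw [sum3_rot]
    refine Finset.sum_congr rfl fun b _ => Finset.sum_congr rfl fun c _ => ?_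
    rw [hBC b c, Finset.sum_mul, ← hBC b c]
  have eC : entropy μ C
      = -∑ a, ∑ b, ∑ c, (prob μ (fun ω => (A ω, B ω, C ω)) (a, b, c)
          * Real.logb 2 (prob μ C c)) := by
    rw [entropy]
    congr 1
    rw [sum3_swap_outer]
    refine Finset.sum_congr rfl fun c _ => ?_
    rw [show prob μ C c * Real.logb 2 (prob μ C c)
        = (∑ a, ∑ b, prob μ (fun ω => (A ω, B ω, C ω)) (a, b, c))
          * Real.logb 2 (prob μ C c) by rw [← hC c]]
    rw [Finset.sum_mul]
    exact Finset.sum_congr rfl fun a _ => Finset.sum_mul _ _ _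
  have expand : condMI μ A B C
      = -∑ a, ∑ b, ∑ c,
      (prob μ (fun ω => (A ω, B ω, C ω)) (a, b, c)
        * (Real.logb 2 (prob μ (fun ω => (A ω, C ω)) (a, c))
          + Real.logb 2 (prob μ (fun ω => (B ω, C ω)) (b, c))
          - Real.logb 2 (prob μ C c)
          - Real.logb 2 (prob μ (fun ω => (A ω, B ω, C ω)) (a, b, c)))) := by
    rw [condMI, eAC, eBC, eC, eABC]
    simp only [mul_sub, mul_add, Finset.sum_sub_distrib, Finset.sum_add_distrib]
    ring
  rw [expand]
  linarith

end Nonneg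
section Ext

variable {Ω 𝒳 𝒴 : Type} [Fintype Ω] [Fintype 𝒳] [DecidableEq 𝒳] [Fintype 𝒴] [DecidableEq 𝒴]

lemma extendPMF_p (μ : FinPMF Ω) (X : Ω → 𝒳) {m : ℕ} (k : 𝒳 → Fin m → ℝ)
    (hk0 : ∀ x u, 0 ≤ k x u) (hk1 : ∀ x, ∑ u, k x u = 1) (p : Ω × Fin m) :
    (extendPMF μ X k hk0 hk1).p p = μ.p p.1 * k (X p.1) p.2 := rfl

lemma prob_fst (μ : FinPMF Ω) (X : Ω → 𝒳) {m : ℕ} (k : 𝒳 → Fin m → ℝ)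
    (hk0 : ∀ x u, 0 ≤ k x u) (hk1 : ∀ x, ∑ u, k x u = 1)
    {α : Type} [DecidableEq α] (g : Ω → α) (v : α) :
    prob (extendPMF μ X k hk0 hk1) (fun p => g p.1) v = prob μ g v := by
  unfold prob
  simp only [Finset.sum_filter, extendPMF_p, Fintype.sum_prod_type]
  refine Finset.sum_congr rfl fun ω _ => ?_
  by_cases h : g ω = v
  · simp [h, ← Finset.mul_sum, hk1]
  · simp [h]

lemma entropy_fst (μ : FinPMF Ω) (X : Ω → 𝒳) {m : ℕ} (k : 𝒳 → Fin m → ℝ)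
    (hk0 : ∀ x u, 0 ≤ k x u) (hk1 : ∀ x, ∑ u, k x u = 1)
    {α : Type} [Fintype α] [DecidableEq α] (g : Ω → α) :
    entropy (extendPMF μ X k hk0 hk1) (fun p => g p.1) = entropy μ g := by
  unfold entropy
  simp_rw [prob_fst]

lemma prob_UY (μ : FinPMF Ω) (X : Ω → 𝒳) {m : ℕ} (k : 𝒳 → Fin m → ℝ)
    (hk0 : ∀ x u, 0 ≤ k x u) (hk1 : ∀ x, ∑ u, k x u = 1)
    (Y : Ω → 𝒴) (u : Fin m) (y : 𝒴) :
    prob (extendPMF μ X k hk0 hk1) (fun p => (p.2, Y p.1)) (u, y)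
      = ∑ ω ∈ Finset.univ.filter (fun ω => Y ω = y), μ.p ω * k (X ω) u := by
  unfold prob
  simp only [Finset.sum_filter, extendPMF_p, Fintype.sum_prod_type, Prod.mk.injEq]
  refine Finset.sum_congr rfl fun ω _ => ?_
  by_cases h : Y ω = y
  · simp [h]
  · simp [h]

lemma prob_XUY (μ : FinPMF Ω) (X : Ω → 𝒳) {m : ℕ} (k : 𝒳 → Fin m → ℝ)
    (hk0 : ∀ x u, 0 ≤ k x u) (hk1 : ∀ x, ∑ u, k x u = 1)
    (Y : Ω → 𝒴) (x : 𝒳) (u : Fin m) (y : 𝒴) :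
    prob (extendPMF μ X k hk0 hk1) (fun p => (X p.1, p.2, Y p.1)) (x, u, y)
      = k x u * prob μ (fun ω => (X ω, Y ω)) (x, y) := by
  unfold prob
  simp only [Finset.sum_filter, extendPMF_p, Fintype.sum_prod_type, Prod.mk.injEq,
    Finset.mul_sum]
  refine Finset.sum_congr rfl fun ω _ => ?_
  by_cases hx : X ω = x
  · by_cases hy : Y ω = y
    · simp [hx, hy, mul_comm, mul_left_comm]
    · simp [hx, hy]
  · simp [hx]

/-- The time-sharing (mixture) kernel. -/
noncomputable def mixK {𝒳 : Type} {m₁ m₂ : ℕ} (a b : ℝ)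
    (k₁ : 𝒳 → Fin m₁ → ℝ) (k₂ : 𝒳 → Fin m₂ → ℝ) : 𝒳 → Fin (m₁ + m₂) → ℝ :=
  fun x => Fin.addCases (fun i => a * k₁ x i) (fun j => b * k₂ x j)

lemma mixK_left {𝒳 : Type} {m₁ m₂ : ℕ} (a b : ℝ) (k₁ : 𝒳 → Fin m₁ → ℝ)
    (k₂ : 𝒳 → Fin m₂ → ℝ) (x : 𝒳) (i : Fin m₁) :
    mixK a b k₁ k₂ x (Fin.castAdd m₂ i) = a * k₁ x i := by
  simp [mixK]

lemma mixK_right {𝒳 : Type} {m₁ m₂ : ℕ} (a b : ℝ) (k₁ : 𝒳 → Fin m₁ → ℝ)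
    (k₂ : 𝒳 → Fin m₂ → ℝ) (x : 𝒳) (j : Fin m₂) :
    mixK a b k₁ k₂ x (Fin.natAdd m₁ j) = b * k₂ x j := by
  simp [mixK]

lemma mixK_nonneg {𝒳 : Type} {m₁ m₂ : ℕ} {a b : ℝ} (ha : 0 ≤ a) (hb : 0 ≤ b)
    {k₁ : 𝒳 → Fin m₁ → ℝ} {k₂ : 𝒳 → Fin m₂ → ℝ}
    (hk₁0 : ∀ x u, 0 ≤ k₁ x u) (hk₂0 : ∀ x u, 0 ≤ k₂ x u) :
    ∀ x u, 0 ≤ mixK a b k₁ k₂ x u := by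
  intro x u
  refine Fin.addCases (motive := fun u => 0 ≤ mixK a b k₁ k₂ x u)
    (fun i => ?_) (fun j => ?_) u
  · show 0 ≤ mixK a b k₁ k₂ x (Fin.castAdd m₂ i)
    rw [mixK_left]; exact mul_nonneg ha (hk₁0 _ _)
  · show 0 ≤ mixK a b k₁ k₂ x (Fin.natAdd m₁ j)
    rw [mixK_right]; exact mul_nonneg hb (hk₂0 _ _)

lemma mixK_sum_one {𝒳 : Type} {m₁ m₂ : ℕ} {a b : ℝ} (hab : a + b = 1)
    {k₁ : 𝒳 → Fin m₁ → ℝ} {k₂ : 𝒳 → Fin m₂ → ℝ}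
    (hk₁1 : ∀ x, ∑ u, k₁ x u = 1) (hk₂1 : ∀ x, ∑ u, k₂ x u = 1) :
    ∀ x, ∑ u, mixK a b k₁ k₂ x u = 1 := by
  intro x
  rw [Fin.sum_univ_add]
  simp_rw [mixK_left, mixK_right, ← Finset.mul_sum, hk₁1, hk₂1, mul_one]
  exact hab

lemma condMI_mix (μ : FinPMF Ω) (X : Ω → 𝒳) (Y : Ω → 𝒴) {m₁ m₂ : ℕ}
    (k₁ : 𝒳 → Fin m₁ → ℝ) (hk₁0 : ∀ x u, 0 ≤ k₁ x u) (hk₁1 : ∀ x, ∑ u, k₁ x u = 1)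
    (k₂ : 𝒳 → Fin m₂ → ℝ) (hk₂0 : ∀ x u, 0 ≤ k₂ x u) (hk₂1 : ∀ x, ∑ u, k₂ x u = 1)
    {a b : ℝ} (ha : 0 ≤ a) (hb : 0 ≤ b) (hab : a + b = 1)
    (hm0 : ∀ x u, 0 ≤ mixK a b k₁ k₂ x u)
    (hm1 : ∀ x, ∑ u, mixK a b k₁ k₂ x u = 1) :
    condMI (extendPMF μ X (mixK a b k₁ k₂) hm0 hm1)
        (fun p => X p.1) (fun p => p.2) (fun p => Y p.1)
      = a * condMI (extendPMF μ X k₁ hk₁0 hk₁1)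
          (fun p => X p.1) (fun p => p.2) (fun p => Y p.1)
        + b * condMI (extendPMF μ X k₂ hk₂0 hk₂1)
          (fun p => X p.1) (fun p => p.2) (fun p => Y p.1) := by
  -- probabilities of the mixture in terms of the components
  have pUYl : ∀ (i : Fin m₁) (y : 𝒴),
      prob (extendPMF μ X (mixK a b k₁ k₂) hm0 hm1) (fun p => (p.2, Y p.1))
        (Fin.castAdd m₂ i, y)
      = a * prob (extendPMF μ X k₁ hk₁0 hk₁1) (fun p => (p.2, Y p.1)) (i, y) := by
    intro i y
    rw [prob_UY, prob_UY, Finset.mul_sum]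
    refine Finset.sum_congr rfl fun ω _ => ?_
    rw [mixK_left]; ring
  have pUYr : ∀ (j : Fin m₂) (y : 𝒴),
      prob (extendPMF μ X (mixK a b k₁ k₂) hm0 hm1) (fun p => (p.2, Y p.1))
        (Fin.natAdd m₁ j, y)
      = b * prob (extendPMF μ X k₂ hk₂0 hk₂1) (fun p => (p.2, Y p.1)) (j, y) := by
    intro j y
    rw [prob_UY, prob_UY, Finset.mul_sum]
    refine Finset.sum_congr rfl fun ω _ => ?_
    rw [mixK_right]; ring
  have pXUYl : ∀ (x : 𝒳) (i : Fin m₁) (y : 𝒴),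
      prob (extendPMF μ X (mixK a b k₁ k₂) hm0 hm1) (fun p => (X p.1, p.2, Y p.1))
        (x, Fin.castAdd m₂ i, y)
      = a * prob (extendPMF μ X k₁ hk₁0 hk₁1) (fun p => (X p.1, p.2, Y p.1)) (x, i, y) := by
    intro x i y
    rw [prob_XUY, prob_XUY, mixK_left]; ring
  have pXUYr : ∀ (x : 𝒳) (j : Fin m₂) (y : 𝒴),
      prob (extendPMF μ X (mixK a b k₁ k₂) hm0 hm1) (fun p => (X p.1, p.2, Y p.1))
        (x, Fin.natAdd m₁ j, y)
      = b * prob (extendPMF μ X k₂ hk₂0 hk₂1) (fun p => (X p.1, p.2, Y p.1)) (x, j, y) := by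
    intro x j y
    rw [prob_XUY, prob_XUY, mixK_right]; ring
  -- entropy of (U, Y) under the mixture
  have eUY : entropy (extendPMF μ X (mixK a b k₁ k₂) hm0 hm1) (fun p => (p.2, Y p.1))
      = a * entropy (extendPMF μ X k₁ hk₁0 hk₁1) (fun p => (p.2, Y p.1))
        + b * entropy (extendPMF μ X k₂ hk₂0 hk₂1) (fun p => (p.2, Y p.1))
        - a * Real.logb 2 a - b * Real.logb 2 b := by
    have base₁ := sum_scaled_logb (ι := Fin m₁ × 𝒴) ha
      (q := fun v => prob (extendPMF μ X k₁ hk₁0 hk₁1) (fun p => (p.2, Y p.1)) v)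
      (fun v => prob_nonneg _ _ _) (sum_prob _ _)
    have base₂ := sum_scaled_logb (ι := Fin m₂ × 𝒴) hb
      (q := fun v => prob (extendPMF μ X k₂ hk₂0 hk₂1) (fun p => (p.2, Y p.1)) v)
      (fun v => prob_nonneg _ _ _) (sum_prob _ _)
    rw [Fintype.sum_prod_type] at base₁ base₂
    simp_rw [Fintype.sum_prod_type] at base₁ base₂
    rw [entropy, Fintype.sum_prod_type, Fin.sum_univ_add]
    simp_rw [pUYl, pUYr]
    rw [base₁, base₂, entropy, entropy, Fintype.sum_prod_type, Fintype.sum_prod_type]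
    ring
  -- entropy of (X, U, Y) under the mixture
  have eXUY : entropy (extendPMF μ X (mixK a b k₁ k₂) hm0 hm1)
        (fun p => (X p.1, p.2, Y p.1))
      = a * entropy (extendPMF μ X k₁ hk₁0 hk₁1) (fun p => (X p.1, p.2, Y p.1))
        + b * entropy (extendPMF μ X k₂ hk₂0 hk₂1) (fun p => (X p.1, p.2, Y p.1))
        - a * Real.logb 2 a - b * Real.logb 2 b := by
    have base₁ := sum_scaled_logb (ι := 𝒳 × Fin m₁ × 𝒴) ha
      (q := fun v => prob (extendPMF μ X k₁ hk₁0 hk₁1) (fun p => (X p.1, p.2, Y p.1)) v)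
      (fun v => prob_nonneg _ _ _) (sum_prob _ _)
    have base₂ := sum_scaled_logb (ι := 𝒳 × Fin m₂ × 𝒴) hb
      (q := fun v => prob (extendPMF μ X k₂ hk₂0 hk₂1) (fun p => (X p.1, p.2, Y p.1)) v)
      (fun v => prob_nonneg _ _ _) (sum_prob _ _)
    rw [Fintype.sum_prod_type] at base₁ base₂
    simp_rw [Fintype.sum_prod_type] at base₁ base₂
    rw [entropy, Fintype.sum_prod_type]
    simp_rw [Fintype.sum_prod_type, Fin.sum_univ_add]
    simp_rw [pXUYl, pXUYr]
    rw [Finset.sum_add_distrib, base₁, base₂, entropy, entropy]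
    simp_rw [Fintype.sum_prod_type]
    ring
  -- unconditional entropies are unaffected by the auxiliary
  have eXY : ∀ {m : ℕ} (k : 𝒳 → Fin m → ℝ) (hk0 : ∀ x u, 0 ≤ k x u)
      (hk1 : ∀ x, ∑ u, k x u = 1),
      entropy (extendPMF μ X k hk0 hk1) (fun p => (X p.1, Y p.1))
        = entropy μ (fun ω => (X ω, Y ω)) :=
    fun k hk0 hk1 => entropy_fst μ X k hk0 hk1 (fun ω => (X ω, Y ω))
  have eY : ∀ {m : ℕ} (k : 𝒳 → Fin m → ℝ) (hk0 : ∀ x u, 0 ≤ k x u)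
      (hk1 : ∀ x, ∑ u, k x u = 1),
      entropy (extendPMF μ X k hk0 hk1) (fun p => Y p.1) = entropy μ Y :=
    fun k hk0 hk1 => entropy_fst μ X k hk0 hk1 Y
  simp only [condMI]
  rw [eUY, eXUY, eXY, eXY, eXY, eY, eY, eY]
  have hb' : b = 1 - a := by linarith
  subst hb'
  ring

end Ext
section CalESec

variable {Ω 𝒳 𝒴 Zt : Type} [Fintype Ω] [Fintype 𝒳] [DecidableEq 𝒳]
    [Fintype 𝒴] [DecidableEq 𝒴] {Zhat : Type} [Fintype Zhat] [Nonempty Zhat]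

/-- Deterministic kernel embedding `X` itself as the auxiliary. -/
noncomputable def detK (𝒳 : Type) [Fintype 𝒳] [DecidableEq 𝒳] :
    𝒳 → Fin (Fintype.card 𝒳) → ℝ :=
  fun x u => if u = Fintype.equivFin 𝒳 x then 1 else 0

lemma detK_nonneg : ∀ (x : 𝒳) u, 0 ≤ detK 𝒳 x u := by
  intro x u
  unfold detK
  split <;> norm_num

lemma detK_sum_one : ∀ x : 𝒳, ∑ u, detK 𝒳 x u = 1 := by
  intro x
  simp [detK]

lemma calE_det_le (μ : FinPMF Ω) (X : Ω → 𝒳) (Y : Ω → 𝒴) (Zr : Ω → Zt)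
    (d : Zt → Zhat → ℝ) (hd : ∀ z zh, 0 ≤ d z zh) :
    calE (extendPMF μ X (detK 𝒳) detK_nonneg detK_sum_one) d
        (fun p => (p.2, Y p.1)) (fun p => Zr p.1)
      ≤ calE μ d (fun ω => (X ω, Y ω)) Zr := by
  refine le_ciInf fun g => ?_
  have hb0 : BddBelow (Set.range fun f : Fin (Fintype.card 𝒳) × 𝒴 → Zhat =>
      expect (extendPMF μ X (detK 𝒳) detK_nonneg detK_sum_one)
        (fun p => d (Zr p.1) (f (p.2, Y p.1)))) := by
    refine ⟨0, ?_⟩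
    rintro r ⟨f, rfl⟩
    exact expect_nonneg _ _ fun p => hd _ _
  have step := ciInf_le hb0 (fun q : Fin (Fintype.card 𝒳) × 𝒴 =>
    g ((Fintype.equivFin 𝒳).symm q.1, q.2))
  refine le_trans step (le_of_eq ?_)
  unfold expect
  rw [Fintype.sum_prod_type]
  refine Finset.sum_congr rfl fun ω _ => ?_
  simp only [extendPMF_p, detK, ite_mul, mul_ite, one_mul, mul_one, zero_mul, mul_zero]
  rw [Finset.sum_ite_eq' Finset.univ (Fintype.equivFin 𝒳 (X ω))
    (fun u => μ.p ω * d (Zr ω) (g ((Fintype.equivFin 𝒳).symm u, Y ω)))]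
  simp

lemma calE_mix_le (μ : FinPMF Ω) (X : Ω → 𝒳) (Y : Ω → 𝒴) (Zr : Ω → Zt)
    (d : Zt → Zhat → ℝ) (hd : ∀ z zh, 0 ≤ d z zh) {m₁ m₂ : ℕ}
    (k₁ : 𝒳 → Fin m₁ → ℝ) (hk₁0 : ∀ x u, 0 ≤ k₁ x u) (hk₁1 : ∀ x, ∑ u, k₁ x u = 1)
    (k₂ : 𝒳 → Fin m₂ → ℝ) (hk₂0 : ∀ x u, 0 ≤ k₂ x u) (hk₂1 : ∀ x, ∑ u, k₂ x u = 1)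
    {a b : ℝ} (ha : 0 ≤ a) (hb : 0 ≤ b) (hab : a + b = 1)
    (hm0 : ∀ x u, 0 ≤ mixK a b k₁ k₂ x u)
    (hm1 : ∀ x, ∑ u, mixK a b k₁ k₂ x u = 1) :
    calE (extendPMF μ X (mixK a b k₁ k₂) hm0 hm1) d
        (fun p => (p.2, Y p.1)) (fun p => Zr p.1)
      ≤ a * calE (extendPMF μ X k₁ hk₁0 hk₁1) d (fun p => (p.2, Y p.1)) (fun p => Zr p.1)
        + b * calE (extendPMF μ X k₂ hk₂0 hk₂1) d (fun p => (p.2, Y p.1))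
            (fun p => Zr p.1) := by
  set E₁ := fun f : Fin m₁ × 𝒴 → Zhat =>
    expect (extendPMF μ X k₁ hk₁0 hk₁1) (fun p => d (Zr p.1) (f (p.2, Y p.1))) with hE₁
  set E₂ := fun f : Fin m₂ × 𝒴 → Zhat =>
    expect (extendPMF μ X k₂ hk₂0 hk₂1) (fun p => d (Zr p.1) (f (p.2, Y p.1))) with hE₂
  set T := calE (extendPMF μ X (mixK a b k₁ k₂) hm0 hm1) d
    (fun p => (p.2, Y p.1)) (fun p => Zr p.1) with hT
  have key : ∀ (f₁ : Fin m₁ × 𝒴 → Zhat) (f₂ : Fin m₂ × 𝒴 → Zhat),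
      T ≤ a * E₁ f₁ + b * E₂ f₂ := by
    intro f₁ f₂
    have hb0 : BddBelow (Set.range fun f : Fin (m₁ + m₂) × 𝒴 → Zhat =>
        expect (extendPMF μ X (mixK a b k₁ k₂) hm0 hm1)
          (fun p => d (Zr p.1) (f (p.2, Y p.1)))) := by
      refine ⟨0, ?_⟩
      rintro r ⟨f, rfl⟩
      exact expect_nonneg _ _ fun p => hd _ _
    have step := ciInf_le hb0 (fun q : Fin (m₁ + m₂) × 𝒴 =>
      Fin.addCases (fun i => f₁ (i, q.2)) (fun j => f₂ (j, q.2)) q.1)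
    refine le_trans step (le_of_eq ?_)
    rw [hE₁, hE₂]
    unfold expect
    simp only [extendPMF_p, Fintype.sum_prod_type]
    rw [Finset.mul_sum, Finset.mul_sum, ← Finset.sum_add_distrib]
    refine Finset.sum_congr rfl fun ω _ => ?_
    rw [Fin.sum_univ_add]
    simp only [mixK_left, mixK_right, Fin.addCases_left, Fin.addCases_right]
    rw [Finset.mul_sum, Finset.mul_sum]
    congr 1 <;> exact Finset.sum_congr rfl fun i _ => by ring
  have hEnn₁ : ∀ f, 0 ≤ E₁ f := fun f => expect_nonneg _ _ fun p => hd _ _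
  have hEnn₂ : ∀ f, 0 ≤ E₂ f := fun f => expect_nonneg _ _ fun p => hd _ _
  have hcal₁ : calE (extendPMF μ X k₁ hk₁0 hk₁1) d (fun p => (p.2, Y p.1))
      (fun p => Zr p.1) = ⨅ f, E₁ f := rfl
  have hcal₂ : calE (extendPMF μ X k₂ hk₂0 hk₂1) d (fun p => (p.2, Y p.1))
      (fun p => Zr p.1) = ⨅ f, E₂ f := rfl
  rw [hcal₁, hcal₂]
  have step1 : ∀ f₁, T ≤ a * E₁ f₁ + b * ⨅ f, E₂ f := by
    intro f₁
    rcases eq_or_lt_of_le hb with hb0 | hb0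
    · obtain ⟨f₂⟩ : Nonempty (Fin m₂ × 𝒴 → Zhat) := inferInstance
      have h := key f₁ f₂
      rw [← hb0] at h ⊢
      simpa using h
    · have h2 : (T - a * E₁ f₁) / b ≤ ⨅ f, E₂ f := by
        refine le_ciInf fun f₂ => ?_
        rw [div_le_iff₀ hb0]
        have := key f₁ f₂
        nlinarith
      rw [div_le_iff₀ hb0] at h2
      nlinarith
  rcases eq_or_lt_of_le ha with ha0 | ha0
  · obtain ⟨f₁⟩ : Nonempty (Fin m₁ × 𝒴 → Zhat) := inferInstance
    have h := step1 f₁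
    rw [← ha0] at h ⊢
    simpa using h
  · have h2 : (T - b * ⨅ f, E₂ f) / a ≤ ⨅ f, E₁ f := by
      refine le_ciInf fun f₁ => ?_
      rw [div_le_iff₀ ha0]
      have := step1 f₁
      nlinarith
    rw [div_le_iff₀ ha0] at h2
    nlinarith

end CalESec

open Pointwise in
/-- **Monotonicity and convexity of the Wyner-Ziv-type rate-distortion function** (used in
the proof of Theorem 6): with `D₀ = ℰ(Z|(X,Y))` the minimum attainable distortion,
`D ↦ R^FWZ_{Z,X|Y}(D)` is non-increasing and convex on `[D₀, ∞)`. -/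
theorem RFWZ_antitoneOn_convexOn
    {Ω 𝒳 𝒴 Zt : Type} [Fintype Ω] [Fintype 𝒳] [DecidableEq 𝒳]
    [Fintype 𝒴] [DecidableEq 𝒴] {Zhat : Type} [Fintype Zhat] [Nonempty Zhat]
    (μ : FinPMF Ω) (X : Ω → 𝒳) (Y : Ω → 𝒴) (Zr : Ω → Zt)
    (d : Zt → Zhat → ℝ) (hd : ∀ z zh, 0 ≤ d z zh) :
    AntitoneOn (fun D => RFWZ μ X Y Zr d D)
      (Set.Ici (calE μ d (fun ω => (X ω, Y ω)) Zr)) ∧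
    ConvexOn ℝ (Set.Ici (calE μ d (fun ω => (X ω, Y ω)) Zr))
      (fun D => RFWZ μ X Y Zr d D) := by
  classical
  set S : ℝ → Set ℝ := fun D => { r : ℝ | ∃ (m : ℕ) (k : 𝒳 → Fin m → ℝ)
      (hk0 : ∀ x u, 0 ≤ k x u) (hk1 : ∀ x, ∑ u, k x u = 1),
      calE (extendPMF μ X k hk0 hk1) d (fun p => (p.2, Y p.1)) (fun p => Zr p.1) ≤ D ∧
      r = condMI (extendPMF μ X k hk0 hk1) (fun p => X p.1) (fun p => p.2)
            (fun p => Y p.1) } with hSdef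
  have hRS : ∀ D, RFWZ μ X Y Zr d D = sInf (S D) := fun D => rfl
  have hbdd : ∀ D, BddBelow (S D) := by
    intro D
    refine ⟨0, ?_⟩
    rintro r ⟨m, k, hk0, hk1, hcal, rfl⟩
    exact condMI_nonneg _ _ _ _
  have hne : ∀ D, calE μ d (fun ω => (X ω, Y ω)) Zr ≤ D → (S D).Nonempty := by
    intro D hD
    exact ⟨condMI (extendPMF μ X (detK 𝒳) detK_nonneg detK_sum_one)
        (fun p => X p.1) (fun p => p.2) (fun p => Y p.1),
      Fintype.card 𝒳, detK 𝒳, detK_nonneg, detK_sum_one,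
      le_trans (calE_det_le μ X Y Zr d hd) hD, rfl⟩
  constructor
  · intro D₁ h₁ D₂ h₂ h12
    simp only
    rw [hRS, hRS]
    refine csInf_le_csInf (hbdd D₂) (hne D₁ h₁) ?_
    rintro r ⟨m, k, hk0, hk1, hcal, hr⟩
    exact ⟨m, k, hk0, hk1, hcal.trans h12, hr⟩
  · refine ⟨convex_Ici _, ?_⟩
    intro D₁ h₁ D₂ h₂ a b ha hb hab
    simp only [smul_eq_mul]
    rw [hRS, hRS, hRS]
    have key : ∀ r₁ ∈ S D₁, ∀ r₂ ∈ S D₂,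
        sInf (S (a * D₁ + b * D₂)) ≤ a * r₁ + b * r₂ := by
      rintro r₁ ⟨m₁, k₁, hk₁0, hk₁1, hc₁, rfl⟩ r₂ ⟨m₂, k₂, hk₂0, hk₂1, hc₂, rfl⟩
      refine csInf_le (hbdd _) ?_
      refine ⟨m₁ + m₂, mixK a b k₁ k₂, mixK_nonneg ha hb hk₁0 hk₂0,
        mixK_sum_one hab hk₁1 hk₂1, ?_, ?_⟩
      · refine le_trans (calE_mix_le μ X Y Zr d hd k₁ hk₁0 hk₁1 k₂ hk₂0 hk₂1
          ha hb hab _ _) ?_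
        exact add_le_add (mul_le_mul_of_nonneg_left hc₁ ha)
          (mul_le_mul_of_nonneg_left hc₂ hb)
      · exact (condMI_mix μ X Y k₁ hk₁0 hk₁1 k₂ hk₂0 hk₂1 ha hb hab _ _).symm
    have hne₁ := hne D₁ h₁
    have hne₂ := hne D₂ h₂
    have s1 : ∀ r₁ ∈ S D₁,
        sInf (S (a * D₁ + b * D₂)) - a * r₁ ≤ b * sInf (S D₂) := by
      intro r₁ hr₁
      have h : sInf (S (a * D₁ + b * D₂)) - a * r₁ ≤ sInf (b • S D₂) := by
        refine le_csInf (hne₂.smul_set) ?_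
        rintro y ⟨r₂, hr₂, rfl⟩
        have := key r₁ hr₁ r₂ hr₂
        simp only [smul_eq_mul]
        linarith
      rwa [Real.sInf_smul_of_nonneg hb, smul_eq_mul] at h
    have s2 : sInf (S (a * D₁ + b * D₂)) - b * sInf (S D₂) ≤ a * sInf (S D₁) := by
      have h : sInf (S (a * D₁ + b * D₂)) - b * sInf (S D₂) ≤ sInf (a • S D₁) := by
        refine le_csInf (hne₁.smul_set) ?_
        rintro y ⟨r₁, hr₁, rfl⟩
        have := s1 r₁ hr₁
        simp only [smul_eq_mul]
        linarith
      rwa [Real.sInf_smul_of_nonneg ha, smul_eq_mul] at h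
    linarith

end Cascade
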